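/- In the rack homology of the three-colour rack T, the cycle C = -(012)-(202)-(122)+(121)+(102)+(110)-(021)-(101)-(211)+(212)+(201)+(220) represents an element of order exactly 3 in H_3(BT); in particular C is not a boundary but 3C is a boundary. -/

import Mathlib

/-- The three-colour rack operation on `T = ZMod 3`: `a ^ b := 2*b - a`. -/
def triOp (a b : ZMod 3) : ZMod 3 := 2 * b - a

/-- Face maps of the rack space of the three-colour rack: `∂_i^0` deletes the
`i`-th coordinate; `∂_i^1` acts by `x_i` on all earlier coordinates and then
deletes the `i`-th coordinate. -/
def triFace (ε : Bool) {n : ℕ} (i : Fin (n + 1)) (x : Fin (n + 1) → ZMod 3) :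
    Fin n → ZMod 3 :=
  Fin.removeNth i (fun j => if ε = true ∧ j < i then triOp (x j) (x i) else x j)

/-- Boundary of a single `(n+1)`-cube: `∂ x = Σ_{i} (-1)^i (∂_i^0 x - ∂_i^1 x)`. -/
noncomputable def triBnd {n : ℕ} (x : Fin (n + 1) → ZMod 3) : (Fin n → ZMod 3) →₀ ℤ :=
  ∑ i : Fin (n + 1), (-1 : ℤ) ^ ((i : ℕ) + 1) •
    (Finsupp.single (triFace false i x) 1 - Finsupp.single (triFace true i x) 1)

/-- The boundary map of the rack chain complex of the three-colour rack,
from degree `n+1` to degree `n`. -/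
noncomputable def triBoundary (n : ℕ) :
    ((Fin (n + 1) → ZMod 3) →₀ ℤ) →ₗ[ℤ] ((Fin n → ZMod 3) →₀ ℤ) :=
  Finsupp.lift _ ℤ _ triBnd

lemma bnd3 (a b c : ZMod 3) : triBnd ![a,b,c] =
    Finsupp.single ![a,c] 1 - Finsupp.single ![triOp a b, c] 1
      - Finsupp.single ![a,b] 1 + Finsupp.single ![triOp a c, triOp b c] 1 := by
  have e00 : triFace false 0 ![a,b,c] = ![b,c] := by funext j; fin_cases j <;> rfl
  have e01 : triFace true 0 ![a,b,c] = ![b,c] := by funext j; fin_cases j <;> rfl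
  have e10 : triFace false 1 ![a,b,c] = ![a,c] := by funext j; fin_cases j <;> rfl
  have e11 : triFace true 1 ![a,b,c] = ![triOp a b, c] := by funext j; fin_cases j <;> rfl
  have e20 : triFace false 2 ![a,b,c] = ![a,b] := by funext j; fin_cases j <;> rfl
  have e21 : triFace true 2 ![a,b,c] = ![triOp a c, triOp b c] := by
    funext j; fin_cases j <;> rfl
  rw [triBnd, Fin.sum_univ_three]
  rw [e00, e01, e10, e11, e20, e21]
  norm_num
  abel

lemma bnd4 (a b c d : ZMod 3) : triBnd ![a,b,c,d] =
    Finsupp.single ![a,c,d] 1 - Finsupp.single ![triOp a b, c, d] 1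
      - Finsupp.single ![a,b,d] 1 + Finsupp.single ![triOp a c, triOp b c, d] 1
      + Finsupp.single ![a,b,c] 1 - Finsupp.single ![triOp a d, triOp b d, triOp c d] 1 := by
  have e00 : triFace false 0 ![a,b,c,d] = ![b,c,d] := by funext j; fin_cases j <;> rfl
  have e01 : triFace true 0 ![a,b,c,d] = ![b,c,d] := by funext j; fin_cases j <;> rfl
  have e10 : triFace false 1 ![a,b,c,d] = ![a,c,d] := by funext j; fin_cases j <;> rfl
  have e11 : triFace true 1 ![a,b,c,d] = ![triOp a b, c, d] := by funext j; fin_cases j <;> rfl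
  have e20 : triFace false 2 ![a,b,c,d] = ![a,b,d] := by funext j; fin_cases j <;> rfl
  have e21 : triFace true 2 ![a,b,c,d] = ![triOp a c, triOp b c, d] := by
    funext j; fin_cases j <;> rfl
  have e30 : triFace false 3 ![a,b,c,d] = ![a,b,c] := by funext j; fin_cases j <;> rfl
  have e31 : triFace true 3 ![a,b,c,d] = ![triOp a d, triOp b d, triOp c d] := by
    funext j; fin_cases j <;> rfl
  rw [triBnd, Fin.sum_univ_four]
  norm_num [show ((3:Fin 4):ℕ) = 3 from rfl]
  rw [e00, e01, e10, e11, e20, e21, e30, e31]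
  norm_num
  abel

lemma tb (n : ℕ) (x : Fin (n+1) → ZMod 3) (r : ℤ) :
    triBoundary n (Finsupp.single x r) = r • triBnd x := by
  simp [triBoundary, Finsupp.lift_apply, Finsupp.sum_single_index]

noncomputable def phi : ((Fin 3 → ZMod 3) →₀ ℤ) →ₗ[ℤ] ZMod 3 :=
  Finsupp.lift _ ℤ _ (fun v => (v 0 - v 1) * 2 * v 2 * (v 2 - v 1) ^ 2)

lemma phi_single (v : Fin 3 → ZMod 3) (r : ℤ) :
    phi (Finsupp.single v r) = r • ((v 0 - v 1) * 2 * v 2 * (v 2 - v 1) ^ 2) := by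
  simp [phi, Finsupp.lift_apply, Finsupp.sum_single_index]

lemma phi_bnd_aux : ∀ a b c d : ZMod 3,
    (a - c) * 2 * d * (d - c) ^ 2 - (triOp a b - c) * 2 * d * (d - c) ^ 2
      - (a - b) * 2 * d * (d - b) ^ 2
      + (triOp a c - triOp b c) * 2 * d * (d - triOp b c) ^ 2
      + (a - b) * 2 * c * (c - b) ^ 2
      - (triOp a d - triOp b d) * 2 * triOp c d * (triOp c d - triOp b d) ^ 2 = 0 := by
  decide

lemma phi_bnd (x : Fin 4 → ZMod 3) : phi (triBnd x) = 0 := by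
  have hx : x = ![x 0, x 1, x 2, x 3] := by funext j; fin_cases j <;> rfl
  rw [hx, bnd4]
  simp only [map_add, map_sub, phi_single, one_smul, Matrix.cons_val_zero,
    Matrix.cons_val_one, Matrix.head_cons, Matrix.cons_val_two, Matrix.tail_cons]
  exact phi_bnd_aux (x 0) (x 1) (x 2) (x 3)

lemma phi_boundary (z : (Fin 4 → ZMod 3) →₀ ℤ) : phi (triBoundary 3 z) = 0 := by
  induction z using Finsupp.induction_linear with
  | zero => simp
  | add f h hf hh => rw [map_add, map_add, hf, hh, add_zero]
  | single a b => rw [tb, map_smul, phi_bnd, smul_zero]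

/-- The generator of the degree-3 chain group given by the 3-cube `(a,b,c)`. -/
noncomputable def g (a b c : ZMod 3) : (Fin 3 → ZMod 3) →₀ ℤ := Finsupp.single ![a, b, c] 1

/-- The chain `C` coming from the diagram of the 2-twist-spun trefoil. -/
noncomputable def C : (Fin 3 → ZMod 3) →₀ ℤ :=
  -g 0 1 2 - g 2 0 2 - g 1 2 2 + g 1 2 1 + g 1 0 2 + g 1 1 0
    - g 0 2 1 - g 1 0 1 - g 2 1 1 + g 2 1 2 + g 2 0 1 + g 2 2 0

/-- The cycle `C` represents an element of order exactly 3 in `H₃(BT)`: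
it is a cycle, it is not a boundary, but `3 C` is a boundary. -/
theorem C_order_three :
    triBoundary 2 C = 0 ∧
    C ∉ LinearMap.range (triBoundary 3) ∧
    (3 : ℤ) • C ∈ LinearMap.range (triBoundary 3) := by
  refine ⟨?_, ?_, ?_⟩
  · simp only [C, g, map_add, map_sub, map_neg, tb, one_smul, bnd3, (show triOp 0 0 = 0 by decide), (show triOp 0 1 = 2 by decide), (show triOp 0 2 = 1 by decide), (show triOp 1 0 = 2 by decide), (show triOp 1 1 = 1 by decide), (show triOp 1 2 = 0 by decide), (show triOp 2 0 = 1 by decide), (show triOp 2 1 = 0 by decide), (show triOp 2 2 = 2 by decide)]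
    abel
  · rintro ⟨z, hz⟩
    have h0 : phi C = 0 := by
      rw [← hz]; exact phi_boundary z
    have h2 : phi C = 2 := by
      simp only [C, g, map_add, map_sub, map_neg, phi_single, one_smul,
        Matrix.cons_val_zero, Matrix.cons_val_one, Matrix.head_cons,
        Matrix.cons_val_two, Matrix.tail_cons]
      decide
    rw [h0] at h2
    exact absurd h2 (by decide)
  · refine ⟨(6 : ℤ) • Finsupp.single ![0,0,0,1] (1:ℤ) +
    (5 : ℤ) • Finsupp.single ![0,0,1,0] (1:ℤ) +
    (-5 : ℤ) • Finsupp.single ![0,0,1,2] (1:ℤ) +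
    (-1 : ℤ) • Finsupp.single ![0,1,0,0] (1:ℤ) +
    (-2 : ℤ) • Finsupp.single ![0,1,0,1] (1:ℤ) +
    (3 : ℤ) • Finsupp.single ![0,1,0,2] (1:ℤ) +
    (-6 : ℤ) • Finsupp.single ![0,1,1,0] (1:ℤ) +
    (3 : ℤ) • Finsupp.single ![0,1,1,1] (1:ℤ) +
    (1 : ℤ) • Finsupp.single ![0,1,1,2] (1:ℤ) +
    (2 : ℤ) • Finsupp.single ![0,1,2,0] (1:ℤ) +
    (-13 : ℤ) • Finsupp.single ![0,1,2,2] (1:ℤ) +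
    (-3 : ℤ) • Finsupp.single ![0,2,0,2] (1:ℤ) +
    (1 : ℤ) • Finsupp.single ![0,2,1,2] (1:ℤ) +
    (2 : ℤ) • Finsupp.single ![0,2,2,2] (1:ℤ) +
    (1 : ℤ) • Finsupp.single ![1,0,1,0] (1:ℤ) +
    (-1 : ℤ) • Finsupp.single ![1,0,1,2] (1:ℤ) +
    (-2 : ℤ) • Finsupp.single ![1,1,0,2] (1:ℤ) +
    (1 : ℤ) • Finsupp.single ![2,0,1,0] (1:ℤ), ?_⟩
    simp only [map_add, map_smul, tb, one_smul, bnd4, (show triOp 0 0 = 0 by decide), (show triOp 0 1 = 2 by decide), (show triOp 0 2 = 1 by decide), (show triOp 1 0 = 2 by decide), (show triOp 1 1 = 1 by decide), (show triOp 1 2 = 0 by decide), (show triOp 2 0 = 1 by decide), (show triOp 2 1 = 0 by decide), (show triOp 2 2 = 2 by decide), C, g]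
    abel
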